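/- Let μ > 0, λ ∈ (0,1), and a, a0 ∈ [−1,1] with a0 ≠ 0. If (1−λ)a + λa0 < 0, then x̃ = −1, ρ1 = 1/(−μ((1−λ)a + λa0)), and ρ = 2ρ1 satisfy ρ > 0, ρ1 > 0, and the Configuration-II equilibrium equations (E1) (1−λ)μa + λμa0·ρ/(2ρ1) + (1−x̃)/ρ = 0 and (E2) (1−λ)μa·ρ/(2ρ1) + λμa0 + 1/ρ1 = 0. -/
import Mathlib

/-- Configuration II, collinear circling equilibrium: if
(1−λ)a + λa0 < 0, then x̃ = −1, ρ1 = 1/(−μ((1−λ)a + λa0)), ρ = 2ρ1 satisfy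
positivity and the equilibrium equations (E1) and (E2). -/
theorem stmt10 (μ lam a a0 xt ρ ρ1 : ℝ)
    (hμ : μ > 0) (hlam1 : 0 < lam) (hlam2 : lam < 1)
    (ha : a ∈ Set.Icc (-1 : ℝ) 1) (ha0 : a0 ∈ Set.Icc (-1 : ℝ) 1) (ha0ne : a0 ≠ 0)
    (hcond : (1 - lam) * a + lam * a0 < 0)
    (hxt : xt = -1)
    (hρ1 : ρ1 = 1 / (-(μ * ((1 - lam) * a + lam * a0))))
    (hρ : ρ = 2 * ρ1) :
    ρ > 0 ∧ ρ1 > 0 ∧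
    (1 - lam) * μ * a + lam * μ * a0 * (ρ / (2 * ρ1)) + (1 - xt) / ρ = 0 ∧
    (1 - lam) * μ * a * (ρ / (2 * ρ1)) + lam * μ * a0 + 1 / ρ1 = 0 := by
  have hden : -(μ * ((1 - lam) * a + lam * a0)) > 0 := by nlinarith
  have hρ1pos : ρ1 > 0 := by rw [hρ1]; positivity
  have hρpos : ρ > 0 := by rw [hρ]; linarith
  refine ⟨hρpos, hρ1pos, ?_, ?_⟩ <;>
  · subst hρ hxt
    have h1 : 1 / ρ1 = -(μ * ((1 - lam) * a + lam * a0)) := by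
      rw [hρ1, one_div_one_div]
    have h2 : ρ1 * (μ * ((1 - lam) * a + lam * a0)) = -1 := by
      have := h1
      field_simp at this
      linarith [this]
    field_simp
    nlinarith [h2]
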